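/- Let p be a prime, l ≥ 1, m = p^l, and j_1, ..., j_m ≥ 1 integers. Then v_p(j_1! · j_2! ⋯ j_m!) ≥ v_p(⌊(j_1 + ... + j_m)/p^l⌋). -/

import Mathlib

lemma aux_kp (p k : ℕ) (hp : 2 ≤ p) (hk : 1 ≤ k) : k + p ≤ p ^ k + 1 := by
  induction k with
  | zero => omega
  | succ n ih =>
    rcases Nat.eq_or_lt_of_le hk with h | h
    · simp [← h]; omega
    · have hn : 1 ≤ n := by omega
      have := ih hn
      have : p ^ n + 1 ≤ p ^ (n + 1) := by
        have h1 : 1 ≤ p ^ n := Nat.one_le_pow _ _ (by omega)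
        calc p ^ n + 1 ≤ p ^ n + p ^ n := by omega
        _ = 2 * p ^ n := by ring
        _ ≤ p * p ^ n := Nat.mul_le_mul_right _ hp
        _ = p ^ (n + 1) := by ring
      omega

lemma div_le_padicValNat_factorial (p n : ℕ) (hp : p.Prime) :
    n / p ≤ padicValNat p n.factorial := by
  haveI : Fact p.Prime := ⟨hp⟩
  have h1 := padicValNat_mul_div_factorial (p := p) n
  have h2 := padicValNat_factorial_mul (p := p) (n / p)
  omega

theorem stmt_3 (p l : ℕ) (hp : p.Prime) (hl : 1 ≤ l)
    (j : Fin (p ^ l) → ℕ) (hj : ∀ i, 1 ≤ j i) :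
    padicValNat p ((∑ i, j i) / p ^ l) ≤ padicValNat p (∏ i, Nat.factorial (j i)) := by
  haveI : Fact p.Prime := ⟨hp⟩
  set S := ∑ i, j i with hS
  set k := padicValNat p (S / p ^ l) with hk
  rcases Nat.eq_zero_or_pos k with h0 | hk1
  · omega
  -- S ≥ p ^ l
  have hSl : p ^ l ≤ S := by
    calc p ^ l = ∑ _i : Fin (p ^ l), 1 := by simp
    _ ≤ S := Finset.sum_le_sum fun i _ => hj i
  have hplpos : 0 < p ^ l := pow_pos hp.pos _
  have hq : 1 ≤ S / p ^ l := (Nat.one_le_div_iff hplpos).mpr hSl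
  -- p ^ k ≤ S / p ^ l
  have hdvd : p ^ k ∣ S / p ^ l := pow_padicValNat_dvd
  have hle : p ^ k ≤ S / p ^ l := Nat.le_of_dvd (by omega) hdvd
  have hSbig : p ^ l * p ^ k ≤ S :=
    le_trans (Nat.mul_le_mul_left _ hle) (Nat.mul_div_le S (p ^ l))
  -- product valuation = sum of valuations
  have hfact : ∀ i : Fin (p ^ l), (j i).factorial ≠ 0 := fun i => Nat.factorial_ne_zero _
  have hprodval : padicValNat p (∏ i, Nat.factorial (j i))
      = ∑ i, padicValNat p (Nat.factorial (j i)) := by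
    have := Nat.factorization_prod (S := Finset.univ) (g := fun i => Nat.factorial (j i))
      (fun i _ => hfact i)
    have h2 := congrFun (congrArg (↑·) this) p
    simp only [Nat.factorization_def _ hp, Finset.sum_apply'] at h2
    simpa [Nat.factorization_def _ hp] using h2
  rw [hprodval]
  -- each valuation ≥ j i / p
  have hlow : ∑ i, j i / p ≤ ∑ i, padicValNat p (Nat.factorial (j i)) :=
    Finset.sum_le_sum fun i _ => div_le_padicValNat_factorial p (j i) hp
  refine le_trans ?_ hlow
  -- now show k ≤ ∑ i, j i / p
  set T := ∑ i, j i / p with hT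
  -- S + p^l ≤ p * T + p * p^l
  have hjsum : S + p ^ l ≤ p * T + p * p ^ l := by
    have key : ∀ i : Fin (p ^ l), j i + 1 ≤ p * (j i / p) + p := by
      intro i
      have h1 := Nat.div_add_mod (j i) p
      have h2 : j i % p < p := Nat.mod_lt _ hp.pos
      omega
    calc S + p ^ l = ∑ i : Fin (p ^ l), (j i + 1) := by
          rw [Finset.sum_add_distrib]; simp; rfl
    _ ≤ ∑ i : Fin (p ^ l), (p * (j i / p) + p) := Finset.sum_le_sum fun i _ => key i
    _ = p * T + p * p ^ l := by
          rw [Finset.sum_add_distrib, ← Finset.mul_sum]; simp [mul_comm]; exact Or.inl rfl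
  have hplgep : p ≤ p ^ l := by
    calc p = p ^ 1 := (pow_one p).symm
    _ ≤ p ^ l := Nat.pow_le_pow_right hp.pos hl
  have hppk : p ≤ p ^ k := by
    calc p = p ^ 1 := (pow_one p).symm
    _ ≤ p ^ k := Nat.pow_le_pow_right hp.pos hk1
  obtain ⟨d, hd⟩ : ∃ d, p ^ k + 1 = p + d := ⟨p ^ k + 1 - p, by omega⟩
  have hTd : p ^ l * d ≤ p * T := by
    have : p ^ l * (p ^ k + 1) ≤ p * T + p * p ^ l := by
      have := Nat.add_le_add_right hSbig (p ^ l)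
      calc p ^ l * (p ^ k + 1) = p ^ l * p ^ k + p ^ l := by ring
      _ ≤ S + p ^ l := this
      _ ≤ p * T + p * p ^ l := hjsum
    have h2 : p ^ l * (p ^ k + 1) = p ^ l * d + p * p ^ l := by rw [hd]; ring
    omega
  have hdT : d ≤ T := by
    have : p * d ≤ p * T := le_trans (Nat.mul_le_mul_right d hplgep) hTd
    exact Nat.le_of_mul_le_mul_left this hp.pos
  have := aux_kp p k hp.two_le hk1
  omega
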